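/- arXiv:1605.05590 — 8 statements merged into one kernel-verified Lean document; each statement's English description precedes it below -/
import Mathlib

section
/- For any finite set S in a metric space and integer k with 1 ≤ k < |S|, the optimal k-center range r*_k is at most the optimal k-farness ρ*_k, i.e., min over k-subsets T of max_{p∈S\T} d(p,T) is at most max over k-subsets T of min_{c∈T} d(c, T\{c}). -/
open ENNReal

/-- For a finite set `S` and `1 ≤ k < |S|`, the optimal k-center range `r*_k`
(min over k-subsets `T` of `max_{p ∈ S \ T} d(p,T)`) is at most the optimal
k-farness `ρ*_k` (max over k-subsets `T` of `min_{c ∈ T} d(c, T \ {c})`). -/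
theorem stmt_1 {α : Type*} [MetricSpace α] [DecidableEq α] (S : Finset α) (k : ℕ)
    (hk1 : 1 ≤ k) (hk2 : k < S.card) :
    (⨅ T ∈ S.powersetCard k, ⨆ p ∈ S \ T, ⨅ c ∈ T, edist p c)
      ≤ ⨆ T ∈ S.powersetCard k, ⨅ c ∈ T, ⨅ c' ∈ T.erase c, edist c c' := by
  classical
  set ρ : ℝ≥0∞ := ⨆ T ∈ S.powersetCard k, ⨅ c ∈ T, ⨅ c' ∈ T.erase c, edist c c' with hρdef
  by_cases hρtop : ρ = ⊤
  · rw [hρtop]; exact le_top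
  have hρlt : ρ < ⊤ := lt_top_iff_ne_top.mpr hρtop
  -- separated subsets of S
  set P : Finset α → Prop := fun T => ∀ c ∈ T, ∀ c' ∈ T, c ≠ c' → ρ < edist c c' with hP
  set F : Finset (Finset α) := S.powerset.filter P with hF
  have hFne : F.Nonempty := ⟨∅, by simp [hF, hP]⟩
  obtain ⟨T0, hT0F, hT0max⟩ := F.exists_max_image Finset.card hFne
  rw [hF, Finset.mem_filter, Finset.mem_powerset] at hT0F
  obtain ⟨hT0S, hT0sep⟩ := hT0F
  -- every point outside T0 is within ρ of T0
  have hnear : ∀ p ∈ S, p ∉ T0 → ∃ c ∈ T0, edist p c ≤ ρ := by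
    intro p hpS hpT0
    by_contra h
    push_neg at h
    have hins : P (insert p T0) := by
      intro c hc c' hc' hne
      rcases Finset.mem_insert.mp hc with hc1 | hc1
      · rcases Finset.mem_insert.mp hc' with hc2 | hc2
        · exact absurd (hc1.trans hc2.symm) hne
        · subst hc1; exact h c' hc2
      · rcases Finset.mem_insert.mp hc' with hc2 | hc2
        · subst hc2; rw [edist_comm]; exact h c hc1
        · exact hT0sep c hc1 c' hc2 hne
    have hmem : insert p T0 ∈ F := by
      rw [hF, Finset.mem_filter, Finset.mem_powerset]
      exact ⟨Finset.insert_subset hpS hT0S, hins⟩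
    have := hT0max _ hmem
    rw [Finset.card_insert_of_notMem hpT0] at this
    omega
  -- T0 has at most k elements
  have hcard : T0.card ≤ k := by
    by_contra h
    push_neg at h
    obtain ⟨U, hUT0, hUcard⟩ := Finset.exists_subset_card_eq h.le
    have hUmem : U ∈ S.powersetCard k :=
      Finset.mem_powersetCard.mpr ⟨hUT0.trans hT0S, hUcard⟩
    have hle : (⨅ c ∈ U, ⨅ c' ∈ U.erase c, edist c c') ≤ ρ := by
      rw [hρdef]
      exact le_iSup_of_le U (le_iSup_of_le hUmem le_rfl)
    have hgt : ρ < ⨅ c ∈ U, ⨅ c' ∈ U.erase c, edist c c' := by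
      rw [← Finset.inf_eq_iInf]
      rw [Finset.lt_inf_iff hρlt]
      intro c hc
      rw [← Finset.inf_eq_iInf, Finset.lt_inf_iff hρlt]
      intro c' hc'
      exact hT0sep c (hUT0 hc) c' (hUT0 (Finset.mem_of_mem_erase hc'))
        (Ne.symm (Finset.ne_of_mem_erase hc'))
    exact absurd hle (not_le.mpr hgt)
  -- pad T0 to a k-subset T of S
  obtain ⟨T, hT0T, hTS, hTcard⟩ := Finset.exists_subsuperset_card_eq hT0S hcard hk2.le
  have hTmem : T ∈ S.powersetCard k := Finset.mem_powersetCard.mpr ⟨hTS, hTcard⟩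
  refine le_trans (iInf_le_of_le T (iInf_le_of_le hTmem le_rfl)) ?_
  refine iSup₂_le fun p hp => ?_
  rw [Finset.mem_sdiff] at hp
  obtain ⟨c, hcT0, hc⟩ := hnear p hp.1 (fun h => hp.2 (hT0T h))
  exact le_trans (iInf_le_of_le c (iInf_le_of_le (hT0T hcT0) le_rfl)) hc
end

section
/- The set T produced by the greedy farthest-point algorithm GMM satisfies the anticover property: r_T ≤ ρ_T, i.e., every point of S is within distance ρ_T of T, where ρ_T is the minimum pairwise distance within T. -/
open ENNReal

/-- Anticover property of the greedy farthest-point algorithm GMM: if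
`c 0, …, c (k-1)` is a greedy run on `S` (each point maximizes its distance to the
previously selected ones), then every point of `S` is within distance `ρ_T` of
`T = {c 0, …, c (k-1)}`, where `ρ_T` is the minimum pairwise distance within `T`. -/
theorem stmt_2 {α : Type*} [MetricSpace α] (S : Finset α) (k : ℕ) (c : ℕ → α)
    (hmem : ∀ j < k, c j ∈ S)
    (hgreedy : ∀ j, 0 < j → j < k → ∀ q ∈ S,
      (⨅ i ∈ Finset.range j, edist q (c i)) ≤ ⨅ i ∈ Finset.range j, edist (c j) (c i)) :
    ∀ p ∈ S, (⨅ i ∈ Finset.range k, edist p (c i)) ≤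
      ⨅ i ∈ Finset.range k, ⨅ j ∈ (Finset.range k).erase i, edist (c i) (c j) := by
  intro p hp
  have key : ∀ m n, m < k → n < m →
      (⨅ i ∈ Finset.range k, edist p (c i)) ≤ edist (c m) (c n) := by
    intro m n hmk hnm
    calc (⨅ i ∈ Finset.range k, edist p (c i))
        ≤ ⨅ i ∈ Finset.range m, edist p (c i) :=
          le_iInf₂ fun i hi => iInf₂_le i (Finset.mem_range.mpr
            ((Finset.mem_range.mp hi).trans hmk))
      _ ≤ ⨅ i ∈ Finset.range m, edist (c m) (c i) :=
          hgreedy m (Nat.lt_of_le_of_lt (Nat.zero_le n) hnm) hmk p hp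
      _ ≤ edist (c m) (c n) := iInf₂_le n (Finset.mem_range.mpr hnm)
  refine le_iInf₂ fun i hi => le_iInf₂ fun j hj => ?_
  rw [Finset.mem_range] at hi
  obtain ⟨hji, hj⟩ := Finset.mem_erase.mp hj
  rw [Finset.mem_range] at hj
  rcases lt_or_gt_of_ne hji with h | h
  · exact key i j hi h
  · rw [edist_comm]
    exact key j i hj h
end

section
/- The greedy farthest-point algorithm GMM is a 2-approximation for the k-center problem: if T = GMM(S,k), then r_T ≤ 2·r*_k. -/
open ENNReal

/-- Key step: for every `k`-subset `T` of `S`, the greedy range is at most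
twice the range of `T`. -/
theorem stmt_3_aux {α : Type*} [MetricSpace α] (S : Finset α) (k : ℕ) (c : ℕ → α)
    (hk : 1 ≤ k)
    (hmem : ∀ j < k, c j ∈ S)
    (hgreedy : ∀ j, 0 < j → j < k → ∀ q ∈ S,
      (⨅ i ∈ Finset.range j, edist q (c i)) ≤ ⨅ i ∈ Finset.range j, edist (c j) (c i))
    (p : α) (hp : p ∈ S) (T : Finset α) (hTcard : T.card = k) :
    (⨅ i ∈ Finset.range k, edist p (c i)) ≤ 2 * ⨆ q ∈ S, ⨅ t ∈ T, edist q t := by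
  set r : ℝ≥0∞ := ⨆ q ∈ S, ⨅ t ∈ T, edist q t with hr
  have hT : T.Nonempty := Finset.card_pos.mp (hTcard ▸ hk)
  have key : ∀ q : α, ∃ t ∈ T, ∀ t' ∈ T, edist q t ≤ edist q t' :=
    fun q => T.exists_min_image (edist q) hT
  choose g hgT hgmin using key
  have hnear : ∀ q ∈ S, edist q (g q) ≤ r := by
    intro q hq
    have h1 : edist q (g q) ≤ ⨅ t ∈ T, edist q t := le_iInf₂ (hgmin q)
    exact h1.trans (le_iSup₂ (f := fun q _ => ⨅ t ∈ T, edist q t) q hq)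
  set P : ℕ → α := fun i => if i < k then c i else p with hP
  have hPS : ∀ i, P i ∈ S := by
    intro i
    by_cases h : i < k
    · simpa [hP, h] using hmem i h
    · simpa [hP, h] using hp
  obtain ⟨i, hi, j, hj, hij, heq⟩ :=
    Finset.exists_ne_map_eq_of_card_lt_of_maps_to
      (s := Finset.range (k + 1)) (t := T)
      (by simp [hTcard]) (fun i _ => hgT (P i))
  -- WLOG i < j
  wlog hlt : i < j generalizing i j
  · exact this j hj i hi hij.symm heq.symm (by omega)
  have hjk : j < k + 1 := Finset.mem_range.mp hj
  have hikk : i < k := by omega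
  have hdist : edist (P i) (P j) ≤ 2 * r := by
    calc edist (P i) (P j) ≤ edist (P i) (g (P i)) + edist (g (P j)) (P j) := by
          rw [heq]; exact edist_triangle _ _ _
      _ ≤ r + r := by
          gcongr
          · exact hnear _ (hPS i)
          · rw [edist_comm]; exact hnear _ (hPS j)
      _ = 2 * r := (two_mul r).symm
  rcases Nat.lt_or_ge j k with hjlt | hjge
  · -- both are greedy centers
    have hPi : P i = c i := if_pos hikk
    have hPj : P j = c j := if_pos hjlt
    calc (⨅ i' ∈ Finset.range k, edist p (c i'))
        ≤ ⨅ i' ∈ Finset.range j, edist p (c i') := by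
          apply biInf_mono
          intro x hx
          simp only [Finset.mem_range] at *
          omega
      _ ≤ ⨅ i' ∈ Finset.range j, edist (c j) (c i') :=
          hgreedy j (by omega) hjlt p hp
      _ ≤ edist (c j) (c i) :=
          iInf₂_le i (Finset.mem_range.mpr hlt)
      _ = edist (P i) (P j) := by rw [hPi, hPj, edist_comm]
      _ ≤ 2 * r := hdist
  · -- j = k, so P j = p
    have hjk' : j = k := by omega
    have hPj : P j = p := by simp [hP, hjk']
    have hPi : P i = c i := if_pos hikk
    calc (⨅ i' ∈ Finset.range k, edist p (c i'))
        ≤ edist p (c i) := iInf₂_le i (Finset.mem_range.mpr hikk)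
      _ = edist (P i) (P j) := by rw [hPi, hPj, edist_comm]
      _ ≤ 2 * r := hdist

/-- GMM is a 2-approximation for k-center: if `c 0, …, c (k-1)` is a greedy
farthest-point run on `S`, then the range of `T = {c 0, …, c (k-1)}` is at most
twice the optimal k-center range `r*_k` of `S`. -/
theorem stmt_3 {α : Type*} [MetricSpace α] (S : Finset α) (k : ℕ) (c : ℕ → α)
    (hk : 1 ≤ k) (hkS : k ≤ S.card)
    (hmem : ∀ j < k, c j ∈ S)
    (hgreedy : ∀ j, 0 < j → j < k → ∀ q ∈ S,
      (⨅ i ∈ Finset.range j, edist q (c i)) ≤ ⨅ i ∈ Finset.range j, edist (c j) (c i)) :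
    ∀ p ∈ S, (⨅ i ∈ Finset.range k, edist p (c i)) ≤
      2 * ⨅ T ∈ S.powersetCard k, ⨆ q ∈ S, ⨅ t ∈ T, edist q t := by
  intro p hp
  -- the infimum over k-subsets is attained at some T₀
  obtain ⟨T₀, hT₀⟩ := Finset.exists_subset_card_eq hkS
  have hPne : (S.powersetCard k).Nonempty :=
    ⟨T₀, Finset.mem_powersetCard.mpr hT₀⟩
  obtain ⟨T, hTmem, hTmin⟩ :=
    (S.powersetCard k).exists_min_image (fun T => ⨆ q ∈ S, ⨅ t ∈ T, edist q t) hPne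
  obtain ⟨hTsub, hTcard⟩ := Finset.mem_powersetCard.mp hTmem
  have hinf : (⨅ T' ∈ S.powersetCard k, ⨆ q ∈ S, ⨅ t ∈ T', edist q t)
      = ⨆ q ∈ S, ⨅ t ∈ T, edist q t := by
    apply le_antisymm
    · exact iInf₂_le T hTmem
    · exact le_iInf₂ hTmin
  rw [hinf]
  exact stmt_3_aux S k c hk hmem hgreedy p hp T hTcard
end

section
/- Let O be an optimal solution of size k for the remote-edge problem on S (maximizing the minimum pairwise distance), with value ρ*_k. If T ⊆ S with |T| ≥ k and there exists a function p : O → T with d(o, p(o)) ≤ (ε'/2)·ρ*_k for all o ∈ O, where 1 − ε' = 1/(1+ε), then the remote-edge k-diversity of T is at least ρ*_k / (1+ε). -/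
open ENNReal

variable {α : Type*} [MetricSpace α] [DecidableEq α]

/-- Remote-edge diversity: minimum pairwise distance of `X`. -/
noncomputable def remoteEdgeDiv (X : Finset α) : ℝ≥0∞ :=
  ⨅ x ∈ X, ⨅ y ∈ X.erase x, edist x y

/-- Remote-edge k-diversity: maximum of `remoteEdgeDiv` over k-subsets of `S`. -/
noncomputable def remoteEdgeDivk (S : Finset α) (k : ℕ) : ℝ≥0∞ :=
  ⨆ X ∈ S.powersetCard k, remoteEdgeDiv X

lemma remoteEdgeDiv_le_edist {X : Finset α} {x y : α} (hx : x ∈ X) (hy : y ∈ X)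
    (hxy : x ≠ y) : remoteEdgeDiv X ≤ edist x y := by
  refine le_trans (iInf₂_le x hx) (iInf₂_le y ?_)
  exact Finset.mem_erase.2 ⟨hxy.symm, hy⟩

lemma le_remoteEdgeDiv {X : Finset α} {c : ℝ≥0∞}
    (h : ∀ x ∈ X, ∀ y ∈ X, x ≠ y → c ≤ edist x y) : c ≤ remoteEdgeDiv X := by
  refine le_iInf₂ fun x hx => le_iInf₂ fun y hy => ?_
  rcases Finset.mem_erase.1 hy with ⟨hyx, hyX⟩
  exact h x hx y hyX (fun e => hyx (e.symm))

lemma remoteEdgeDiv_le_divk {X S : Finset α} {k : ℕ} (hXS : X ⊆ S) (hXk : X.card = k) :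
    remoteEdgeDiv X ≤ remoteEdgeDivk S k :=
  le_iSup₂ (f := fun X _ => remoteEdgeDiv X) X (Finset.mem_powersetCard.2 ⟨hXS, hXk⟩)

/-- If `O` is an optimal remote-edge solution of size `k` for `S` with value
`ρ*_k`, and `T ⊆ S` with `|T| ≥ k` admits a (not necessarily injective) proxy
function `p : O → T` with `d(o, p(o)) ≤ (ε'/2)·ρ*_k` where `1 - ε' = 1/(1+ε)`,
then the remote-edge k-diversity of `T` is at least `ρ*_k/(1+ε)`. -/
theorem stmt_4 (S O T : Finset α) (k : ℕ) (ε ε' : ℝ)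
    (hε : 0 < ε) (hε1 : ε ≤ 1) (hε' : 1 - ε' = 1 / (1 + ε))
    (hOS : O ⊆ S) (hOk : O.card = k)
    (hopt : remoteEdgeDiv O = remoteEdgeDivk S k)
    (hTS : T ⊆ S) (hTk : k ≤ T.card)
    (p : α → α) (hpT : ∀ o ∈ O, p o ∈ T)
    (hclose : ∀ o ∈ O, edist o (p o) ≤ ENNReal.ofReal (ε' / 2) * remoteEdgeDivk S k) :
    remoteEdgeDivk S k ≤ (1 + ENNReal.ofReal ε) * remoteEdgeDivk T k := by
  set ρ := remoteEdgeDivk S k with hρdef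
  have h1ε : (0:ℝ) < 1 + ε := by linarith
  have hε'v : ε' = ε / (1 + ε) := by
    field_simp at hε' ⊢
    linarith
  have hε'pos : 0 < ε' := by rw [hε'v]; positivity
  have hε'lt1 : ε' < 1 := by
    rw [hε'v, div_lt_one h1ε]; linarith
  by_cases hinf : ρ = ⊤
  · -- then k ≤ 1
    have hk1 : k ≤ 1 := by
      by_contra h
      push_neg at h
      obtain ⟨o1, ho1, o2, ho2, hne⟩ := Finset.one_lt_card.mp (hOk ▸ h)
      have := remoteEdgeDiv_le_edist ho1 ho2 hne
      rw [hopt, hinf, top_le_iff] at this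
      exact (edist_lt_top o1 o2).ne this
    obtain ⟨X, hXT, hXk⟩ := Finset.exists_subset_card_eq hTk
    have hX : remoteEdgeDiv X = ⊤ := by
      refine top_le_iff.1 (le_remoteEdgeDiv fun x hx y hy hxy => ?_)
      have h2 : 1 < X.card := Finset.one_lt_card.2 ⟨x, hx, y, hy, hxy⟩
      omega
    have hT : remoteEdgeDivk T k = ⊤ :=
      top_le_iff.1 (hX ▸ remoteEdgeDiv_le_divk hXT hXk)
    rw [hT, ENNReal.mul_top (by simp)]
    exact le_top
  · by_cases hρ0 : ρ = 0
    · rw [hρ0]; exact zero_le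
    -- key bound from triangle inequality
    have hsum : ENNReal.ofReal (ε' / 2) * ρ + ENNReal.ofReal (ε' / 2) * ρ
        = ENNReal.ofReal ε' * ρ := by
      rw [← add_mul, ← ENNReal.ofReal_add (by positivity) (by positivity)]
      norm_num
    have hinj : Set.InjOn p O := by
      intro o1 ho1 o2 ho2 hpe
      by_contra hne
      have hd : ρ ≤ edist o1 o2 := hopt ▸ remoteEdgeDiv_le_edist ho1 ho2 hne
      have hle : edist o1 o2 ≤ ENNReal.ofReal ε' * ρ := by
        calc edist o1 o2 ≤ edist o1 (p o1) + edist (p o1) o2 := edist_triangle _ _ _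
          _ = edist o1 (p o1) + edist o2 (p o2) := by rw [hpe, edist_comm (p o2) o2]
          _ ≤ ENNReal.ofReal (ε' / 2) * ρ + ENNReal.ofReal (ε' / 2) * ρ :=
              add_le_add (hclose o1 ho1) (hclose o2 ho2)
          _ = ENNReal.ofReal ε' * ρ := hsum
      have hlt : ENNReal.ofReal ε' * ρ < 1 * ρ := by
        rw [ENNReal.mul_lt_mul_iff_left hρ0 hinf]
        exact ENNReal.ofReal_lt_one.2 hε'lt1
      rw [one_mul] at hlt
      exact absurd (hd.trans hle) (not_le.2 hlt)
    set X : Finset α := O.image p with hXdef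
    have hXT : X ⊆ T := by
      intro x hx
      obtain ⟨o, ho, rfl⟩ := Finset.mem_image.1 hx
      exact hpT o ho
    have hXk : X.card = k := by
      rw [hXdef, Finset.card_image_of_injOn hinj, hOk]
    have hXdiv : ENNReal.ofReal (1 - ε') * ρ ≤ remoteEdgeDiv X := by
      refine le_remoteEdgeDiv fun a ha b hb hab => ?_
      obtain ⟨o1, ho1, rfl⟩ := Finset.mem_image.1 ha
      obtain ⟨o2, ho2, rfl⟩ := Finset.mem_image.1 hb
      have hone : o1 ≠ o2 := fun e => hab (by rw [e])
      have hd : ρ ≤ edist o1 o2 := hopt ▸ remoteEdgeDiv_le_edist ho1 ho2 hone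
      have htri : edist o1 o2 ≤ edist (p o1) (p o2) + ENNReal.ofReal ε' * ρ := by
        calc edist o1 o2 ≤ edist o1 (p o1) + edist (p o1) (p o2) + edist (p o2) o2 :=
              edist_triangle4 _ _ _ _
          _ = edist (p o1) (p o2) + (edist o1 (p o1) + edist o2 (p o2)) := by
              rw [edist_comm (p o2) o2]; ring
          _ ≤ edist (p o1) (p o2) + (ENNReal.ofReal (ε' / 2) * ρ + ENNReal.ofReal (ε' / 2) * ρ) :=
              add_le_add le_rfl (add_le_add (hclose o1 ho1) (hclose o2 ho2))
          _ = edist (p o1) (p o2) + ENNReal.ofReal ε' * ρ := by rw [hsum]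
      have hsplit : ENNReal.ofReal (1 - ε') * ρ + ENNReal.ofReal ε' * ρ = ρ := by
        rw [← add_mul, ← ENNReal.ofReal_add (by linarith) (by positivity)]
        norm_num
      have : ENNReal.ofReal (1 - ε') * ρ + ENNReal.ofReal ε' * ρ
          ≤ edist (p o1) (p o2) + ENNReal.ofReal ε' * ρ := by
        rw [hsplit]; exact hd.trans htri
      exact (ENNReal.add_le_add_iff_right
        (ENNReal.mul_ne_top ENNReal.ofReal_ne_top hinf)).1 this
    have hTdiv : ENNReal.ofReal (1 - ε') * ρ ≤ remoteEdgeDivk T k :=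
      hXdiv.trans (remoteEdgeDiv_le_divk hXT hXk)
    have hmul : (1 + ENNReal.ofReal ε) * ENNReal.ofReal (1 - ε') = 1 := by
      rw [show (1:ℝ≥0∞) + ENNReal.ofReal ε = ENNReal.ofReal (1 + ε) by
            rw [ENNReal.ofReal_add (by norm_num) hε.le, ENNReal.ofReal_one],
        ← ENNReal.ofReal_mul (by linarith)]
      rw [show (1 + ε) * (1 - ε') = 1 by rw [hε']; field_simp]
      exact ENNReal.ofReal_one
    calc ρ = (1 + ENNReal.ofReal ε) * (ENNReal.ofReal (1 - ε') * ρ) := by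
            rw [← mul_assoc, hmul, one_mul]
      _ ≤ (1 + ENNReal.ofReal ε) * remoteEdgeDivk T k := mul_le_mul_right hTdiv _
end

section
/- Let O be a k-subset of S maximizing the remote-clique diversity div(X) = Σ_{x,y∈X, unordered pairs} d(x,y). Let ρ̄ = div(O)/C(k,2), and suppose T ⊆ S with |T| ≥ k admits an injective function p : O → T with d(o, p(o)) ≤ (ε'/2)·ρ̄ for all o ∈ O, where 1 − ε' = 1/(1+ε). Then div_k(T) ≥ div(O)/(1+ε). -/
variable {α : Type*} [MetricSpace α] [DecidableEq α]

/-- Remote-clique diversity: sum of distances over unordered pairs of `X`. -/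
noncomputable def cliqueDiv (X : Finset α) : ℝ :=
  (∑ e ∈ X.offDiag, dist e.1 e.2) / 2

/-- If `O` is a k-subset of `S` maximizing the remote-clique diversity,
`ρ̄ = div(O)/C(k,2)`, and `T ⊆ S` with `|T| ≥ k` admits an injective proxy
`p : O → T` with `d(o,p(o)) ≤ (ε'/2)·ρ̄` where `1 - ε' = 1/(1+ε)`, then
`div_k(T) ≥ div(O)/(1+ε)`. -/
theorem stmt_5 (S O T : Finset α) (k : ℕ) (hk : 2 ≤ k) (ε ε' : ℝ)
    (hε : 0 < ε) (hε1 : ε ≤ 1) (hε' : 1 - ε' = 1 / (1 + ε))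
    (hOS : O ⊆ S) (hOk : O.card = k)
    (hopt : ∀ X ⊆ S, X.card = k → cliqueDiv X ≤ cliqueDiv O)
    (hTS : T ⊆ S) (hTk : k ≤ T.card)
    (p : α → α) (hpT : ∀ o ∈ O, p o ∈ T) (hinj : Set.InjOn p ↑O)
    (hclose : ∀ o ∈ O, dist o (p o) ≤ (ε' / 2) * (cliqueDiv O / (k.choose 2))) :
    ∃ T' ⊆ T, T'.card = k ∧ cliqueDiv O ≤ (1 + ε) * cliqueDiv T' := by
  classical
  have h1ε : (0:ℝ) < 1 + ε := by linarith
  set ρ : ℝ := cliqueDiv O / (k.choose 2) with hρ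
  refine ⟨O.image p, Finset.image_subset_iff.mpr hpT, ?_, ?_⟩
  · rw [Finset.card_image_of_injOn hinj, hOk]
  · -- reindex the sum
    have hsum : ∑ e ∈ O.offDiag, dist (p e.1) (p e.2)
        = ∑ e ∈ (O.image p).offDiag, dist e.1 e.2 := by
      refine Finset.sum_nbij (fun e => (p e.1, p e.2)) ?_ ?_ ?_ ?_
      · rintro ⟨a, b⟩ he
        rw [Finset.mem_offDiag] at he ⊢
        exact ⟨Finset.mem_image_of_mem p he.1, Finset.mem_image_of_mem p he.2.1,
          fun h => he.2.2 (hinj he.1 he.2.1 h)⟩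
      · rintro ⟨a, b⟩ ha ⟨c, d⟩ hc h
        simp only [Finset.coe_offDiag, Set.mem_offDiag] at ha hc
        simp only [Prod.mk.injEq] at h
        exact Prod.ext (hinj ha.1 hc.1 h.1) (hinj ha.2.1 hc.2.1 h.2)
      · rintro ⟨x, y⟩ hxy
        rw [Finset.coe_offDiag, Set.mem_offDiag] at hxy
        obtain ⟨a, ha, rfl⟩ := Finset.mem_image.mp hxy.1
        obtain ⟨b, hb, rfl⟩ := Finset.mem_image.mp hxy.2.1
        refine ⟨(a, b), ?_, rfl⟩
        rw [Finset.mem_coe, Finset.mem_offDiag]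
        exact ⟨ha, hb, fun h => hxy.2.2 (congrArg p h)⟩
      · intros; rfl
    -- per-pair bound
    have hpair : ∀ e ∈ O.offDiag, dist e.1 e.2 - ε' * ρ ≤ dist (p e.1) (p e.2) := by
      rintro ⟨a, b⟩ he
      rw [Finset.mem_offDiag] at he
      have h1 := hclose a he.1
      have h2 := hclose b he.2.1
      have h3 : dist a b ≤ dist a (p a) + dist (p a) (p b) + dist (p b) b :=
        dist_triangle4 a (p a) (p b) b
      have h4 : dist (p b) b = dist b (p b) := dist_comm _ _
      simp only
      linarith
    have hcard : (O.offDiag.card : ℝ) = 2 * (k.choose 2 : ℕ) := by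
      rw [Finset.offDiag_card, hOk]
      have h2 : 2 * k.choose 2 = k * k - k := by
        rw [Nat.choose_two_right, Nat.mul_div_cancel']
        · cases k with
          | zero => rfl
          | succ n =>
            rw [Nat.succ_sub_one, Nat.mul_succ, Nat.add_sub_cancel]
        · exact Nat.even_mul_pred_self k |>.two_dvd
      rw [← h2]
      push_cast
      ring
    have hC2 : (0:ℝ) < (k.choose 2 : ℕ) := by
      have : 0 < k.choose 2 := Nat.choose_pos hk
      exact_mod_cast this
    have hmr : (O.offDiag.card : ℝ) * (ε' * ρ) = ε' * (∑ e ∈ O.offDiag, dist e.1 e.2) := by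
      have hA : ∑ e ∈ O.offDiag, dist e.1 e.2 = 2 * cliqueDiv O := by
        unfold cliqueDiv; ring
      rw [hcard, hρ, hA]
      field_simp
    have hsumle : (∑ e ∈ O.offDiag, dist e.1 e.2) - ε' * (∑ e ∈ O.offDiag, dist e.1 e.2)
        ≤ ∑ e ∈ (O.image p).offDiag, dist e.1 e.2 := by
      rw [← hsum, ← hmr]
      calc (∑ e ∈ O.offDiag, dist e.1 e.2) - (O.offDiag.card : ℝ) * (ε' * ρ)
          = ∑ e ∈ O.offDiag, (dist e.1 e.2 - ε' * ρ) := by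
            rw [Finset.sum_sub_distrib, Finset.sum_const, nsmul_eq_mul]
        _ ≤ ∑ e ∈ O.offDiag, dist (p e.1) (p e.2) := Finset.sum_le_sum hpair
    -- conclude
    have hDdef : cliqueDiv (O.image p) = (∑ e ∈ (O.image p).offDiag, dist e.1 e.2) / 2 := rfl
    have hAdef : cliqueDiv O = (∑ e ∈ O.offDiag, dist e.1 e.2) / 2 := rfl
    have hkey : (1 - ε') * cliqueDiv O ≤ cliqueDiv (O.image p) := by
      rw [hDdef, hAdef]; linarith
    have heq : (1 + ε) * ((1 - ε') * cliqueDiv O) = cliqueDiv O := by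
      rw [hε']; field_simp
    calc cliqueDiv O = (1 + ε) * ((1 - ε') * cliqueDiv O) := heq.symm
      _ ≤ (1 + ε) * cliqueDiv (O.image p) := by
          exact mul_le_mul_of_nonneg_left hkey (le_of_lt h1ε)
end

section
/- Let O be a k-subset of S maximizing the remote-cycle diversity div(X) = w(TSP(X)) (minimum weight Hamiltonian cycle on X). Suppose T ⊆ S with |T| ≥ k admits a function p : O → T with d(o, p(o)) ≤ (ε'/2)·div(O)/k for all o ∈ O, where 1 − ε' = 1/(1+ε). Then div_k(T) ≥ div(O)/(1+ε). -/
variable {α : Type*} [MetricSpace α]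

/-- Minimum weight of a Hamiltonian cycle (TSP tour) through the points of `X`. -/
noncomputable def tspWeight (X : Finset α) : ℝ :=
  sInf { w | ∃ e : Fin X.card ≃ {x // x ∈ X},
    w = ∑ i, dist (e i : α) (e (finRotate X.card i) : α) }

namespace Stmt7Aux
variable {α : Type*} [MetricSpace α]

noncomputable def pw : List α → ℝ
  | [] => 0
  | [_] => 0
  | a :: b :: l => dist a b + pw (b :: l)

@[simp] lemma pw_nil : pw ([] : List α) = 0 := rfl
@[simp] lemma pw_single (a : α) : pw [a] = 0 := rfl
@[simp] lemma pw_cons_cons (a b : α) (l : List α) :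
    pw (a :: b :: l) = dist a b + pw (b :: l) := rfl

lemma pw_nonneg : ∀ l : List α, 0 ≤ pw l
  | [] => le_refl _
  | [_] => le_refl _
  | _ :: b :: l => add_nonneg dist_nonneg (pw_nonneg (b :: l))

noncomputable def cw (l : List α) : ℝ :=
  ∑ i : Fin l.length, dist (l.get i) (l.get (finRotate l.length i))

lemma pw_eq_sum (a : α) (t : List α) :
    pw (a :: t) = ∑ i : Fin t.length, dist ((a :: t).get i.castSucc) ((a :: t).get i.succ) := by
  induction t generalizing a with
  | nil => simp
  | cons b t ih =>
    rw [pw_cons_cons]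
    simp only [List.length_cons]
    rw [Fin.sum_univ_succ]
    congr 1
    rw [ih b]
    apply Finset.sum_congr rfl
    intro i _
    rfl

@[simp] lemma cw_nil : cw ([] : List α) = 0 := by simp [cw]

lemma cw_cons (a : α) (t : List α) : cw (a :: t) = pw ((a :: t) ++ [a]) := by
  have h1 : ((a :: t).length : ℕ) = (t ++ [a]).length := by simp
  rw [show (a :: t) ++ [a] = a :: (t ++ [a]) from rfl, pw_eq_sum, cw]
  refine Fintype.sum_equiv (finCongr h1) _ _ ?_
  intro i
  have hiv : i.val < t.length + 1 := i.isLt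
  have hget1 : (a :: (t ++ [a])).get (Fin.castSucc (finCongr h1 i)) = (a :: t).get i := by
    rw [List.get_eq_getElem, List.get_eq_getElem]
    show (((a :: t) ++ [a]))[(i.val)]'(by simp) = _
    rw [List.getElem_append_left]
  congr 1
  · exact hget1.symm
  · -- second components
    rw [List.get_eq_getElem, List.get_eq_getElem]
    show ((a :: t)).get _ = (((a :: t) ++ [a]))[((finCongr h1 i).succ.val)]'(by simp; omega)
    rcases Nat.lt_or_ge (i.val + 1) (t.length + 1) with hlt | hge
    · have hr : (finRotate (a :: t).length i).val = i.val + 1 := by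
        show (finRotate (t.length + 1) i).val = i.val + 1
        rw [finRotate_succ_apply, Fin.val_add_one]
        have : i ≠ Fin.last t.length := by
          intro h
          rw [h] at hlt
          simp at hlt
        simp [this]
      have hs : ((finCongr h1 i).succ.val : ℕ) = i.val + 1 := by simp
      rw [List.get_eq_getElem]
      have := List.getElem_append_left (as := a :: t) (bs := [a]) (i := i.val + 1)
        (by simpa using hlt) (h' := by simp; omega)
      simp only [hs, hr]
      rw [this]
    · -- i = last
      have hi : i.val = t.length := by omega
      have hr : (finRotate (a :: t).length i).val = 0 := by
        show (finRotate (t.length + 1) i).val = 0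
        have : i = Fin.last t.length := by
          apply Fin.ext; simpa using hi
        rw [this, finRotate_last]
        rfl
      have hs : ((finCongr h1 i).succ.val : ℕ) = t.length + 1 := by simp [hi]
      rw [List.get_eq_getElem]
      simp only [hs, hr]
      rw [List.getElem_append_right (by simp)]
      simp

lemma pw_append_cons : ∀ (xs : List α) (b : α) (ys : List α) (h : xs ≠ []),
    pw (xs ++ b :: ys) = pw xs + dist (xs.getLast h) b + pw (b :: ys)
  | [], _, _, h => absurd rfl h
  | [a], b, ys, _ => by simp
  | a :: c :: xs, b, ys, _ => by
    have ih := pw_append_cons (c :: xs) b ys (by simp)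
    rw [List.cons_append] at ih
    rw [show (a :: c :: xs) ++ b :: ys = a :: c :: (xs ++ b :: ys) from rfl, pw_cons_cons, ih,
      pw_cons_cons, List.getLast_cons (l := c :: xs) (by simp)]
    ring

lemma cw_append_comm (xs ys : List α) : cw (xs ++ ys) = cw (ys ++ xs) := by
  cases xs with
  | nil => simp
  | cons x xs' =>
    cases ys with
    | nil => simp
    | cons y ys' =>
      rw [show (x :: xs') ++ (y :: ys') = x :: (xs' ++ y :: ys') from rfl, cw_cons]
      rw [show (y :: ys') ++ (x :: xs') = y :: (ys' ++ x :: xs') from rfl, cw_cons]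
      -- expand both via pw_append_cons
      rw [show (x :: (xs' ++ y :: ys')) ++ [x] = (x :: xs') ++ (y :: (ys' ++ [x])) by simp]
      rw [show (y :: (ys' ++ x :: xs')) ++ [y] = (y :: ys') ++ (x :: (xs' ++ [y])) by simp]
      rw [pw_append_cons (x :: xs') y (ys' ++ [x]) (by simp)]
      rw [pw_append_cons (y :: ys') x (xs' ++ [y]) (by simp)]
      rw [show y :: (ys' ++ [x]) = (y :: ys') ++ [x] from rfl]
      rw [show x :: (xs' ++ [y]) = (x :: xs') ++ [y] from rfl]
      rw [pw_append_cons (y :: ys') x [] (by simp)]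
      rw [pw_append_cons (x :: xs') y [] (by simp)]
      simp only [pw_single]
      ring

/-- Block traversal lemma. -/
lemma block_bound (s : α) : ∀ (bs : List α) (u : α) (r : List α),
    pw (u :: (bs ++ r)) ≤ dist u s + ((bs.map fun o => 2 * dist o s).sum) + pw (s :: r)
  | [], u, [] => by simpa using dist_nonneg
  | [], u, x :: r' => by
    simp only [List.nil_append, List.map_nil, List.sum_nil, add_zero, pw_cons_cons]
    have := dist_triangle u s x
    linarith
  | o :: bs', u, r => by
    rw [show (o :: bs') ++ r = o :: (bs' ++ r) from rfl, pw_cons_cons]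
    have ih := block_bound s bs' o r
    have htri := dist_triangle u s o
    simp only [List.map_cons, List.sum_cons]
    have hd : dist o s = dist s o := dist_comm o s
    linarith

lemma sum_map_two_dist_nonneg (s : α) (bs : List α) :
    0 ≤ (bs.map fun o => 2 * dist o s).sum := by
  apply List.sum_nonneg
  intro x hx
  simp only [List.mem_map] at hx
  obtain ⟨o, _, rfl⟩ := hx
  positivity

/-- detour cost of anchor `s` -/
noncomputable def dcost (B : α → List α) (s : α) : ℝ := ((B s).map fun o => 2 * dist o s).sum

lemma dcost_nonneg (B : α → List α) (s : α) : 0 ≤ dcost B s := sum_map_two_dist_nonneg s (B s)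

lemma bind_bound (B : α → List α) (v : α) : ∀ (ts : List α) (u t : α),
    pw (u :: (ts.flatMap B ++ [v])) ≤
      dist u t + pw (t :: (ts ++ [v])) + ((ts.map (dcost B)).sum)
  | [], u, t => by
    simp only [List.flatMap_nil, List.nil_append, List.map_nil, List.sum_nil, add_zero,
      pw_cons_cons, pw_single]
    have := dist_triangle u t v
    linarith
  | s :: ts', u, t => by
    have h1 : (s :: ts').flatMap B ++ [v] = B s ++ (ts'.flatMap B ++ [v]) := by
      simp [List.flatMap_cons]
    rw [h1]
    have hbl := block_bound s (B s) u (ts'.flatMap B ++ [v])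
    have hbi := bind_bound B v ts' s s
    have htri := dist_triangle u t s
    have hrw : pw (t :: ((s :: ts') ++ [v])) = dist t s + pw (s :: (ts' ++ [v])) := by
      simp
    simp only [List.map_cons, List.sum_cons, hrw, dcost] at *
    have hd : dist s s = 0 := dist_self s
    linarith


lemma main_bound (B : α → List α) (t : α) (ts : List α) (o : α) (os : List α)
    (hB : B t = o :: os) :
    cw ((t :: ts).flatMap B) ≤ cw (t :: ts) + ((t :: ts).map (dcost B)).sum := by
  have hflat : (t :: ts).flatMap B = o :: (os ++ ts.flatMap B) := by
    simp [List.flatMap_cons, hB]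
  rw [hflat, cw_cons, cw_cons]
  rw [show (o :: (os ++ ts.flatMap B)) ++ [o] = o :: (os ++ (ts.flatMap B ++ [o])) by simp]
  have hbl := block_bound t os o (ts.flatMap B ++ [o])
  have hbi := bind_bound B o ts t t
  -- pw (t :: (ts ++ [o])) ≤ pw ((t :: ts) ++ [t]) + dist t o
  have hlast : pw (t :: (ts ++ [o])) ≤ pw ((t :: ts) ++ [t]) + dist t o := by
    have e1 := pw_append_cons (t :: ts) o [] (by simp)
    have e2 := pw_append_cons (t :: ts) t [] (by simp)
    rw [List.cons_append] at e1
    rw [e1, e2]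
    have := dist_triangle ((t :: ts).getLast (by simp)) t o
    simp only [pw_single]
    linarith
  have hsum : ((t :: ts).map (dcost B)).sum
      = 2 * dist o t + (os.map fun x => 2 * dist x t).sum + (ts.map (dcost B)).sum := by
    simp [dcost, hB]
  have hd : dist t t = 0 := dist_self t
  have hto : dist t o = dist o t := dist_comm t o
  linarith

lemma cw_flatMap_le (B : α → List α) (l : List α) (t : α) (ht : t ∈ l) (hBt : B t ≠ []) :
    Stmt7Aux.cw (l.flatMap B) ≤ Stmt7Aux.cw l + (l.map (dcost B)).sum := by
  obtain ⟨l1, l2, rfl⟩ := List.append_of_mem ht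
  obtain ⟨o, os, hB⟩ : ∃ o os, B t = o :: os := by
    cases hBo : B t with
    | nil => exact absurd hBo hBt
    | cons o os => exact ⟨o, os, rfl⟩
  have h1 : cw ((l1 ++ t :: l2).flatMap B) = cw (((t :: l2) ++ l1).flatMap B) := by
    rw [List.flatMap_append, List.flatMap_append, cw_append_comm]
  have h2 : cw (l1 ++ t :: l2) = cw ((t :: l2) ++ l1) := cw_append_comm _ _
  have h3 : ((l1 ++ t :: l2).map (dcost B)).sum = (((t :: l2) ++ l1).map (dcost B)).sum := by
    simp only [List.map_append, List.sum_append]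
    ring
  rw [h1, h2, h3]
  rw [show (t :: l2) ++ l1 = t :: (l2 ++ l1) from rfl]
  exact main_bound B t (l2 ++ l1) o os hB


lemma finCongr_finRotate {m n : ℕ} (h : m = n) (i : Fin m) :
    finCongr h (finRotate m i) = finRotate n (finCongr h i) := by
  subst h
  simp

lemma sum_eq_cw {X : Finset α} (l : List α) (hcard : X.card = l.length)
    (f : Fin X.card → α) (hf : ∀ i, f i = l.get (finCongr hcard i)) :
    ∑ i : Fin X.card, dist (f i) (f (finRotate X.card i)) = cw l := by
  rw [cw]
  refine Fintype.sum_equiv (finCongr hcard) _ _ ?_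
  intro i
  rw [hf, hf, finCongr_finRotate]

lemma tspWeight_bddBelow (X : Finset α) :
    BddBelow { w | ∃ e : Fin X.card ≃ {x // x ∈ X},
      w = ∑ i, dist (e i : α) (e (finRotate X.card i) : α) } := by
  refine ⟨0, ?_⟩
  rintro w ⟨e, rfl⟩
  exact Finset.sum_nonneg fun i _ => dist_nonneg

lemma tspWeight_le_cw [DecidableEq α] (X : Finset α) (l : List α) (hnd : l.Nodup) (hX : l.toFinset = X) :
    tspWeight X ≤ cw l := by
  have hcard : X.card = l.length := by
    rw [← hX]
    exact List.toFinset_card_of_nodup hnd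
  have hmem : ∀ i : Fin l.length, l.get i ∈ X := by
    intro i
    rw [← hX]
    exact List.mem_toFinset.mpr (List.get_mem l i)
  let f : Fin l.length → {x // x ∈ X} := fun i => ⟨l.get i, hmem i⟩
  have hinj : Function.Injective f := by
    intro i j hij
    exact List.nodup_iff_injective_get.mp hnd (congrArg Subtype.val hij)
  have hbij : Function.Bijective f := by
    rw [Fintype.bijective_iff_injective_and_card]
    refine ⟨hinj, ?_⟩
    simp [Fintype.card_coe, ← hcard]
  let e₀ : Fin l.length ≃ {x // x ∈ X} := Equiv.ofBijective f hbij
  let e : Fin X.card ≃ {x // x ∈ X} := (finCongr hcard).trans e₀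
  apply csInf_le (tspWeight_bddBelow X)
  refine ⟨e, ?_⟩
  refine (sum_eq_cw l hcard (fun i => (e i : α)) fun i => rfl).symm

lemma le_tspWeight [DecidableEq α] (X : Finset α) (c : ℝ)
    (h : ∀ l : List α, l.Nodup → l.toFinset = X → c ≤ cw l) : c ≤ tspWeight X := by
  apply le_csInf
  · exact ⟨_, X.equivFin.symm, rfl⟩
  rintro w ⟨e, rfl⟩
  set l : List α := List.ofFn (fun i => (e i : α)) with hl
  have hlen : l.length = X.card := List.length_ofFn
  have hnd : l.Nodup := by
    rw [hl, List.nodup_ofFn]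
    intro i j hij
    exact e.injective (Subtype.ext hij)
  have hXl : l.toFinset = X := by
    ext x
    simp only [List.mem_toFinset, hl, List.mem_ofFn, Set.mem_range]
    constructor
    · rintro ⟨i, rfl⟩
      exact (e i).2
    · intro hx
      exact ⟨e.symm ⟨x, hx⟩, by simp⟩
  have hget : ∀ i : Fin X.card, (e i : α) = l.get (finCongr hlen.symm i) := by
    intro i
    show (e i : α) = (List.ofFn fun j => (e j : α)).get _
    rw [List.get_ofFn]
    congr 1
  rw [sum_eq_cw l hlen.symm (fun i => (e i : α)) hget]
  exact h l hnd hXl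

end Stmt7Aux

/-- If `O` is a k-subset of `S` maximizing the remote-cycle diversity
`div(X) = w(TSP(X))`, and `T ⊆ S` with `|T| ≥ k` admits a proxy `p : O → T`
with `d(o,p(o)) ≤ (ε'/2)·div(O)/k` where `1 - ε' = 1/(1+ε)`, then
`div_k(T) ≥ div(O)/(1+ε)`. -/
theorem stmt_7 (S O T : Finset α) (k : ℕ) (hk : 0 < k) (ε ε' : ℝ)
    (hε : 0 < ε) (hε1 : ε ≤ 1) (hε' : 1 - ε' = 1 / (1 + ε))
    (hOS : O ⊆ S) (hOk : O.card = k)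
    (hopt : ∀ X ⊆ S, X.card = k → tspWeight X ≤ tspWeight O)
    (hTS : T ⊆ S) (hTk : k ≤ T.card)
    (p : α → α) (hpT : ∀ o ∈ O, p o ∈ T)
    (hclose : ∀ o ∈ O, dist o (p o) ≤ (ε' / 2) * (tspWeight O / k)) :
    ∃ T' ⊆ T, T'.card = k ∧ tspWeight O ≤ (1 + ε) * tspWeight T' := by
  classical
  have hO0 : O.Nonempty := Finset.card_pos.mp (by rw [hOk]; exact hk)
  obtain ⟨o₀, ho₀⟩ := hO0
  have himg : O.image p ⊆ T := by
    intro x hx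
    obtain ⟨o, ho, rfl⟩ := Finset.mem_image.mp hx
    exact hpT o ho
  obtain ⟨T', hT'1, hT'2, hT'card⟩ :=
    Finset.exists_subsuperset_card_eq himg (Finset.card_image_le.trans hOk.le) hTk
  refine ⟨T', hT'2, hT'card, ?_⟩
  set B : α → List α := fun t => (O.filter fun o => p o = t).toList with hB
  have hmemB : ∀ x t, x ∈ B t ↔ x ∈ O ∧ p x = t := by
    intro x t
    rw [hB]
    simp [Finset.mem_toList, Finset.mem_filter]
  have himgT' : ∀ o ∈ O, p o ∈ T' := fun o ho => hT'1 (Finset.mem_image_of_mem p ho)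
  have key : tspWeight O ≤ tspWeight T' + 2 * ∑ o ∈ O, dist o (p o) := by
    have h2 : tspWeight O - 2 * ∑ o ∈ O, dist o (p o) ≤ tspWeight T' := by
      apply Stmt7Aux.le_tspWeight
      intro l hnd hlT
      have hLnd : (l.flatMap B).Nodup := by
        rw [List.nodup_flatMap]
        refine ⟨fun t _ => Finset.nodup_toList _, ?_⟩
        refine hnd.imp ?_
        intro a b hab
        intro x hxa hxb
        obtain ⟨_, ha⟩ := (hmemB x a).mp hxa
        obtain ⟨_, hb⟩ := (hmemB x b).mp hxb
        exact hab (ha ▸ hb)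
      have hLT : (l.flatMap B).toFinset = O := by
        ext x
        rw [List.mem_toFinset, List.mem_flatMap]
        constructor
        · rintro ⟨t, _, hx⟩
          exact ((hmemB x t).mp hx).1
        · intro hx
          refine ⟨p x, ?_, (hmemB x (p x)).mpr ⟨hx, rfl⟩⟩
          rw [← List.mem_toFinset, hlT]
          exact himgT' x hx
      have h3 : tspWeight O ≤ Stmt7Aux.cw (l.flatMap B) := Stmt7Aux.tspWeight_le_cw O _ hLnd hLT
      have h4 : Stmt7Aux.cw (l.flatMap B) ≤ Stmt7Aux.cw l + (l.map (Stmt7Aux.dcost B)).sum := by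
        apply Stmt7Aux.cw_flatMap_le B l (p o₀)
        · rw [← List.mem_toFinset, hlT]
          exact himgT' o₀ ho₀
        · exact List.ne_nil_of_mem ((hmemB o₀ (p o₀)).mpr ⟨ho₀, rfl⟩)
      have h5 : (l.map (Stmt7Aux.dcost B)).sum = 2 * ∑ o ∈ O, dist o (p o) := by
        rw [← List.sum_toFinset _ hnd, hlT]
        have h6 : ∀ t ∈ T', Stmt7Aux.dcost B t = ∑ o ∈ O.filter fun o => p o = t, 2 * dist o (p o) := by
          intro t _
          rw [Stmt7Aux.dcost, hB]
          rw [Finset.sum_map_toList]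
          apply Finset.sum_congr rfl
          intro o ho
          rw [(Finset.mem_filter.mp ho).2]
        rw [Finset.sum_congr rfl h6]
        rw [Finset.sum_fiberwise_of_maps_to himgT']
        rw [Finset.mul_sum]
      linarith
    linarith
  -- sum bound
  have hsum : ∑ o ∈ O, dist o (p o) ≤ (k : ℝ) * ((ε' / 2) * (tspWeight O / k)) := by
    calc ∑ o ∈ O, dist o (p o) ≤ ∑ _o ∈ O, (ε' / 2) * (tspWeight O / k) :=
          Finset.sum_le_sum hclose
      _ = (k : ℝ) * ((ε' / 2) * (tspWeight O / k)) := by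
          rw [Finset.sum_const, hOk, nsmul_eq_mul]
  have hkne : (k : ℝ) ≠ 0 := Nat.cast_ne_zero.mpr hk.ne'
  have hsum2 : 2 * ∑ o ∈ O, dist o (p o) ≤ ε' * tspWeight O := by
    have : (k : ℝ) * ((ε' / 2) * (tspWeight O / k)) = ε' * tspWeight O / 2 := by
      field_simp
    linarith
  have h1ε : (0 : ℝ) < 1 + ε := by linarith
  have hfin : (1 - ε') * tspWeight O ≤ tspWeight T' := by nlinarith [key, hsum2]
  rw [hε'] at hfin
  have hmul := mul_le_mul_of_nonneg_left hfin h1ε.le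
  have hcan : (1 + ε) * (1 / (1 + ε) * tspWeight O) = tspWeight O := by
    field_simp
  linarith
end

section
/- Let O be a k-subset of S maximizing the remote-tree diversity div(X) = w(MST(X)). Suppose T ⊆ S with |T| ≥ k admits an injective function p : O → T with d(o, p(o)) ≤ (ε'/2)·ρ*_k for all o ∈ O, where 1 − ε' = 1/(1+ε) and ρ*_k is the optimal farness of S w.r.t. k. Then div_k(T) ≥ div(O)/(1+ε). -/
variable {α : Type*} [MetricSpace α]

/-- Minimum weight of a spanning tree of the complete metric graph on `X`,
expressed via enumerations with a parent function. -/
noncomputable def mstWeight (X : Finset α) : ℝ :=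
  sInf { w | ∃ e : Fin X.card ≃ {x // x ∈ X}, ∃ π : Fin X.card → Fin X.card,
    (∀ i : Fin X.card, 0 < (i : ℕ) → π i < i) ∧
    w = ∑ i ∈ Finset.univ.filter (fun i : Fin X.card => 0 < (i : ℕ)),
      dist (e i : α) (e (π i) : α) }

/-- `ρ` is the optimal farness of `S` w.r.t. `k`: some k-subset has all pairwise
distances at least `ρ`, and every k-subset has a pair at distance at most `ρ`. -/
def IsOptFarness (S : Finset α) (k : ℕ) (ρ : ℝ) : Prop :=
  (∃ U ⊆ S, U.card = k ∧ ∀ x ∈ U, ∀ y ∈ U, x ≠ y → ρ ≤ dist x y) ∧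
  (∀ U ⊆ S, U.card = k → ∃ x ∈ U, ∃ y ∈ U, x ≠ y ∧ dist x y ≤ ρ)

private lemma filter_pos_card_aux (n : ℕ) :
    ((Finset.univ.filter (fun i : Fin n => 0 < (i : ℕ))).card) = n - 1 := by
  cases n with
  | zero => simp
  | succ m =>
    have h : (Finset.univ.filter (fun i : Fin (m+1) => 0 < (i : ℕ)))
        = Finset.univ.erase 0 := by
      ext i
      simp [Fin.pos_iff_ne_zero']
    rw [h, Finset.card_erase_of_mem (Finset.mem_univ _), Finset.card_univ, Fintype.card_fin]

private lemma mst_lower_aux (U : Finset α) (ρ : ℝ) (hU : 1 ≤ U.card)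
    (h : ∀ x ∈ U, ∀ y ∈ U, x ≠ y → ρ ≤ dist x y) :
    ((U.card : ℝ) - 1) * ρ ≤ mstWeight U := by
  apply le_csInf
  · exact ⟨_, U.equivFin.symm, fun i => ⟨0, i.pos⟩,
      fun i hi => by simpa [Fin.lt_def] using hi, rfl⟩
  · rintro w ⟨e, π, hπ, rfl⟩
    have hterm : ∀ i ∈ Finset.univ.filter (fun i : Fin U.card => 0 < (i : ℕ)),
        ρ ≤ dist (e i : α) (e (π i) : α) := by
      intro i hi
      simp only [Finset.mem_filter] at hi
      have hne : (e i : α) ≠ (e (π i) : α) := by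
        intro hcontra
        have : e i = e (π i) := Subtype.ext hcontra
        exact (ne_of_lt (hπ i hi.2)) (e.injective this).symm
      exact h _ (e i).2 _ (e (π i)).2 hne
    calc ((U.card : ℝ) - 1) * ρ
        = ((Finset.univ.filter (fun i : Fin U.card => 0 < (i : ℕ))).card : ℝ) * ρ := by
          rw [filter_pos_card_aux]
          rw [Nat.cast_sub hU]; norm_num
      _ ≤ _ := by
          rw [← nsmul_eq_mul]
          exact Finset.card_nsmul_le_sum _ _ _ hterm

private lemma mst_transfer_aux [DecidableEq α] (O T' : Finset α) (p : α → α) (c : ℝ)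
    (hO1 : 1 ≤ O.card)
    (himg : T' = O.image p) (hinj : Set.InjOn p ↑O)
    (hclose : ∀ o ∈ O, dist o (p o) ≤ c) :
    mstWeight O ≤ mstWeight T' + ((O.card : ℝ) - 1) * (2 * c) := by
  have hcard : O.card = T'.card := by
    rw [himg, Finset.card_image_of_injOn hinj]
  have key : ∀ w ∈ { w | ∃ e : Fin T'.card ≃ {x // x ∈ T'}, ∃ π : Fin T'.card → Fin T'.card,
      (∀ i : Fin T'.card, 0 < (i : ℕ) → π i < i) ∧
      w = ∑ i ∈ Finset.univ.filter (fun i : Fin T'.card => 0 < (i : ℕ)),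
        dist (e i : α) (e (π i) : α) },
      mstWeight O - ((O.card : ℝ) - 1) * (2 * c) ≤ w := by
    rintro w ⟨e, π, hπ, rfl⟩
    set q : {x // x ∈ O} → {x // x ∈ T'} :=
      fun x => ⟨p x, by rw [himg]; exact Finset.mem_image_of_mem p x.2⟩ with hq
    have hbij : Function.Bijective q := by
      constructor
      · intro a b hab
        have : p (a : α) = p (b : α) := congrArg Subtype.val hab
        exact Subtype.ext (hinj (Finset.mem_coe.mpr a.2) (Finset.mem_coe.mpr b.2) this)
      · rintro ⟨y, hy⟩
        rw [himg] at hy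
        obtain ⟨x, hx, hpx⟩ := Finset.mem_image.mp hy
        exact ⟨⟨x, hx⟩, Subtype.ext hpx⟩
    set qe : {x // x ∈ O} ≃ {x // x ∈ T'} := Equiv.ofBijective q hbij with hqe
    have hp : ∀ y : {x // x ∈ T'}, p ((qe.symm y : {x // x ∈ O}) : α) = (y : α) :=
      fun y => congrArg Subtype.val (qe.apply_symm_apply y)
    set e' : Fin O.card ≃ {x // x ∈ O} := (finCongr hcard).trans (e.trans qe.symm) with he'
    set π' : Fin O.card → Fin O.card :=
      fun i => finCongr hcard.symm (π (finCongr hcard i)) with hπ'def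
    have hπ' : ∀ i : Fin O.card, 0 < (i : ℕ) → π' i < i := by
      intro i hi
      have := hπ (finCongr hcard i) (by simpa using hi)
      simpa [hπ'def, Fin.lt_def] using this
    have step1 : mstWeight O ≤ ∑ i ∈ Finset.univ.filter (fun i : Fin O.card => 0 < (i : ℕ)),
        dist (e' i : α) (e' (π' i) : α) := by
      apply csInf_le
      · refine ⟨0, fun w hw => ?_⟩
        obtain ⟨e, π, h, rfl⟩ := hw
        exact Finset.sum_nonneg fun i _ => dist_nonneg
      · exact ⟨e', π', hπ', rfl⟩
    have step2 : ∑ i ∈ Finset.univ.filter (fun i : Fin O.card => 0 < (i : ℕ)),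
        dist (e' i : α) (e' (π' i) : α)
        = ∑ j ∈ Finset.univ.filter (fun j : Fin T'.card => 0 < (j : ℕ)),
          dist ((qe.symm (e j) : {x // x ∈ O}) : α) ((qe.symm (e (π j)) : {x // x ∈ O}) : α) := by
      apply Finset.sum_equiv (finCongr hcard)
      · intro i; simp
      · intro i hi
        simp [he', hπ'def, Equiv.trans_apply]
    have step3 : ∑ j ∈ Finset.univ.filter (fun j : Fin T'.card => 0 < (j : ℕ)),
        dist ((qe.symm (e j) : {x // x ∈ O}) : α) ((qe.symm (e (π j)) : {x // x ∈ O}) : α)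
        ≤ ∑ j ∈ Finset.univ.filter (fun j : Fin T'.card => 0 < (j : ℕ)),
          (dist (e j : α) (e (π j) : α) + 2 * c) := by
      apply Finset.sum_le_sum
      intro j hj
      set a : {x // x ∈ O} := qe.symm (e j)
      set b : {x // x ∈ O} := qe.symm (e (π j))
      have h4 : dist (a : α) (b : α) ≤
          dist (a : α) (p (a : α)) + dist (p (a : α)) (p (b : α)) + dist (p (b : α)) (b : α) :=
        dist_triangle4 _ _ _ _
      have ha : dist (a : α) (p (a : α)) ≤ c := hclose _ a.2
      have hb : dist (p (b : α)) (b : α) ≤ c := by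
        rw [dist_comm]; exact hclose _ b.2
      have hmid : dist (p (a : α)) (p (b : α)) = dist (e j : α) (e (π j) : α) := by
        rw [hp (e j), hp (e (π j))]
      linarith
    have step4 : ∑ j ∈ Finset.univ.filter (fun j : Fin T'.card => 0 < (j : ℕ)),
        (dist (e j : α) (e (π j) : α) + 2 * c)
        = (∑ j ∈ Finset.univ.filter (fun j : Fin T'.card => 0 < (j : ℕ)),
          dist (e j : α) (e (π j) : α)) + ((O.card : ℝ) - 1) * (2 * c) := by
      have h1 : ((T'.card - 1 : ℕ) : ℝ) = (O.card : ℝ) - 1 := by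
        rw [hcard, Nat.cast_sub (hcard ▸ hO1)]; norm_num
      rw [Finset.sum_add_distrib, Finset.sum_const, nsmul_eq_mul, filter_pos_card_aux, h1]
    linarith [step1, step2 ▸ step1, step3, step4]
  have hne : ∃ w, w ∈ { w | ∃ e : Fin T'.card ≃ {x // x ∈ T'}, ∃ π : Fin T'.card → Fin T'.card,
      (∀ i : Fin T'.card, 0 < (i : ℕ) → π i < i) ∧
      w = ∑ i ∈ Finset.univ.filter (fun i : Fin T'.card => 0 < (i : ℕ)),
        dist (e i : α) (e (π i) : α) } :=
    ⟨_, T'.equivFin.symm, fun i => ⟨0, i.pos⟩, fun i hi => by simpa [Fin.lt_def] using hi, rfl⟩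
  have : mstWeight O - ((O.card : ℝ) - 1) * (2 * c) ≤ mstWeight T' := le_csInf hne key
  linarith

/-- If `O` is a k-subset of `S` maximizing the remote-tree diversity
`div(X) = w(MST(X))`, and `T ⊆ S` with `|T| ≥ k` admits an injective proxy
`p : O → T` with `d(o,p(o)) ≤ (ε'/2)·ρ*_k` where `1 - ε' = 1/(1+ε)`, then
`div_k(T) ≥ div(O)/(1+ε)`. -/
theorem stmt_8 (S O T : Finset α) (k : ℕ) (hk : 2 ≤ k) (ε ε' ρ : ℝ)
    (hε : 0 < ε) (hε1 : ε ≤ 1) (hε' : 1 - ε' = 1 / (1 + ε))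
    (hρ : IsOptFarness S k ρ)
    (hOS : O ⊆ S) (hOk : O.card = k)
    (hopt : ∀ X ⊆ S, X.card = k → mstWeight X ≤ mstWeight O)
    (hTS : T ⊆ S) (hTk : k ≤ T.card)
    (p : α → α) (hpT : ∀ o ∈ O, p o ∈ T) (hinj : Set.InjOn p ↑O)
    (hclose : ∀ o ∈ O, dist o (p o) ≤ (ε' / 2) * ρ) :
    ∃ T' ⊆ T, T'.card = k ∧ mstWeight O ≤ (1 + ε) * mstWeight T' := by
  classical
  have h1pos : (0 : ℝ) < 1 + ε := by linarith
  -- ε' is nonnegative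
  have hε'0 : 0 ≤ ε' := by
    have hle : 1 / (1 + ε) ≤ 1 := by
      rw [div_le_one h1pos]; linarith
    linarith
  -- ρ is nonnegative
  have hρ0 : 0 ≤ ρ := by
    obtain ⟨T'', hT''T, hT''k⟩ := Finset.exists_subset_card_eq hTk
    obtain ⟨x, hx, y, hy, hxy, hd⟩ := hρ.2 T'' (hT''T.trans hTS) hT''k
    exact le_trans dist_nonneg hd
  -- the far set gives a lower bound for mstWeight O
  obtain ⟨U, hUS, hUk, hUfar⟩ := hρ.1
  have hUlb : ((k : ℝ) - 1) * ρ ≤ mstWeight U := by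
    have := mst_lower_aux U ρ (by omega : 1 ≤ U.card) hUfar
    rwa [hUk] at this
  have hUO : mstWeight U ≤ mstWeight O := hopt U hUS hUk
  -- take T' = image of O under p
  refine ⟨O.image p, ?_, ?_, ?_⟩
  · intro x hx
    obtain ⟨o, ho, rfl⟩ := Finset.mem_image.mp hx
    exact hpT o ho
  · rw [Finset.card_image_of_injOn hinj, hOk]
  · have htrans := mst_transfer_aux O (O.image p) p ((ε' / 2) * ρ)
      (by omega : 1 ≤ O.card) rfl hinj hclose
    rw [hOk] at htrans
    have h2c : ((k : ℝ) - 1) * (2 * ((ε' / 2) * ρ)) = ε' * (((k : ℝ) - 1) * ρ) := by ring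
    rw [h2c] at htrans
    have hbound : ε' * (((k : ℝ) - 1) * ρ) ≤ ε' * mstWeight O :=
      mul_le_mul_of_nonneg_left (hUlb.trans hUO) hε'0
    have h2 : (1 - ε') * mstWeight O ≤ mstWeight (O.image p) := by linarith
    rw [hε'] at h2
    have h3 := mul_le_mul_of_nonneg_left h2 (le_of_lt h1pos)
    have h4 : (1 + ε) * (1 / (1 + ε) * mstWeight O) = mstWeight O := by
      field_simp
    linarith
end

section
/- Let T = ⋃_{i=1}^ℓ GMM(S_i, k') where S_1,…,S_ℓ partition S, the metric space has doubling dimension D, and k' = (8/ε')^D · k for 0 < ε' ≤ 1. Then for any k-subset X ⊆ S there exists a function p : X → T with d(x, p(x)) ≤ (ε'/2)·ρ*_k for all x ∈ X, where ρ*_k is the optimal farness of S w.r.t. k. -/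
open Metric

variable {α : Type*} [MetricSpace α]

lemma iter_double {α : Type*} [MetricSpace α] [DecidableEq α] (D : ℕ)
    (hdouble : ∀ (x : α) (r : ℝ), ∃ F : Finset α, F.card ≤ 2 ^ D ∧
      closedBall x r ⊆ ⋃ c ∈ F, closedBall c (r / 2)) :
    ∀ (m : ℕ) (r : ℝ) (G : Finset α), ∃ F : Finset α, F.card ≤ G.card * 2 ^ (D * m) ∧
      (⋃ y ∈ G, closedBall y r) ⊆ ⋃ y ∈ F, closedBall y (r / 2 ^ m) := by
  intro m
  induction m with
  | zero => intro r G; exact ⟨G, by simp, by simp⟩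
  | succ n ih =>
    intro r G
    obtain ⟨F₁, hF₁c, hF₁s⟩ := ih r G
    choose Φ hΦc hΦs using fun y => hdouble y (r / 2 ^ n)
    refine ⟨F₁.biUnion Φ, ?_, ?_⟩
    · calc (F₁.biUnion Φ).card ≤ ∑ y ∈ F₁, (Φ y).card := Finset.card_biUnion_le
        _ ≤ ∑ _y ∈ F₁, 2 ^ D := Finset.sum_le_sum fun y _ => hΦc y
        _ = F₁.card * 2 ^ D := by rw [Finset.sum_const, smul_eq_mul]
        _ ≤ G.card * 2 ^ (D * n) * 2 ^ D := Nat.mul_le_mul_right _ hF₁c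
        _ = G.card * 2 ^ (D * (n + 1)) := by rw [mul_assoc, ← pow_add, Nat.mul_succ]
    · intro z hz
      have hz1 := hF₁s hz
      simp only [Set.mem_iUnion] at hz1 ⊢
      obtain ⟨y, hy, hzy⟩ := hz1
      have hz2 := hΦs y hzy
      simp only [Set.mem_iUnion] at hz2
      obtain ⟨b, hb, hzb⟩ := hz2
      refine ⟨b, Finset.mem_biUnion.mpr ⟨y, hy, hb⟩, ?_⟩
      have : r / 2 ^ n / 2 = r / 2 ^ (n + 1) := by ring
      rwa [this] at hzb

/-- Let `T = ⋃ᵢ GMM(Sᵢ, k')` where `S₁,…,S_ℓ` partition `S`, in a space of doubling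
dimension `D`, with `k' ≥ (8/ε')^D·k`. Then any k-subset `X ⊆ S` admits a proxy
function `p : X → T` with `d(x,p(x)) ≤ (ε'/2)·ρ*_k`. -/
theorem stmt_10 [DecidableEq α] (D : ℕ)
    (hdouble : ∀ (x : α) (r : ℝ), ∃ F : Finset α, F.card ≤ 2 ^ D ∧
      closedBall x r ⊆ ⋃ c ∈ F, closedBall c (r / 2))
    (ℓ k k' : ℕ) (ε' ρ : ℝ) (hε' : 0 < ε') (hε1 : ε' ≤ 1)
    (hk : 0 < k) (hk' : (8 / ε') ^ D * k ≤ (k' : ℝ))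
    (Ss : Fin ℓ → Finset α) (S : Finset α)
    (hS : S = Finset.univ.biUnion Ss)
    (hdisj : ∀ i j, i ≠ j → Disjoint (Ss i) (Ss j))
    (c : Fin ℓ → ℕ → α)
    (hmem : ∀ i, ∀ j < k', c i j ∈ Ss i)
    (hgreedy : ∀ i, ∀ j, ∀ hj : 0 < j, j < k' → ∀ q ∈ Ss i,
      ((Finset.range j).inf' (Finset.nonempty_range_iff.mpr hj.ne')
        fun t => dist q (c i t)) ≤
      ((Finset.range j).inf' (Finset.nonempty_range_iff.mpr hj.ne')
        fun t => dist (c i j) (c i t)))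
    (T : Finset α)
    (hT : T = Finset.univ.biUnion fun i => (Finset.range k').image (c i))
    (hρ : IsOptFarness S k ρ) :
    ∀ X ⊆ S, X.card = k →
      ∃ p : α → α, (∀ x ∈ X, p x ∈ T) ∧ ∀ x ∈ X, dist x (p x) ≤ (ε' / 2) * ρ := by
  -- basic facts
  obtain ⟨⟨U, hUS, hUcard, _⟩, hopt⟩ := hρ
  obtain ⟨a, ha, b, hb, hab, hdab⟩ := hopt U hUS hUcard
  have hρ0 : 0 ≤ ρ := le_trans dist_nonneg hdab
  have hk2 : 2 ≤ k := by
    rw [← hUcard]; exact Finset.one_lt_card.mpr ⟨a, ha, b, hb, hab⟩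
  have h8ε : (1:ℝ) ≤ 8 / ε' := by
    rw [le_div_iff₀ hε']; linarith
  have hkk' : k ≤ k' := by
    have : (k:ℝ) ≤ (k':ℝ) := by
      calc (k:ℝ) = 1 * k := (one_mul _).symm
        _ ≤ (8 / ε') ^ D * k := by
            apply mul_le_mul_of_nonneg_right (one_le_pow₀ h8ε) (by positivity)
        _ ≤ k' := hk'
    exact_mod_cast this
  -- choose m with 2^m ≤ 8/ε' < 2^(m+1)
  obtain ⟨m, hm1, hm2⟩ := exists_nat_pow_near h8ε (one_lt_two (α := ℝ))
  -- the key claim: every point of S is close to T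
  have key : ∀ x ∈ S, ∃ y ∈ T, dist x y ≤ (ε' / 2) * ρ := by
    intro x hx
    rw [hS, Finset.mem_biUnion] at hx
    obtain ⟨i, -, hxi⟩ := hx
    set f : ℕ → ℝ := fun j => if h : j = 0 then 0 else
      (Finset.range j).inf' (Finset.nonempty_range_iff.mpr h) fun t => dist (c i j) (c i t)
      with hf
    have hfeq : ∀ j (h : 0 < j), f j =
        (Finset.range j).inf' (Finset.nonempty_range_iff.mpr h.ne') fun t => dist (c i j) (c i t) := by
      intro j h; simp [hf, h.ne']
    -- monotonicity
    have hfmono : ∀ j₁ j₂, 0 < j₁ → j₁ ≤ j₂ → j₂ < k' → f j₂ ≤ f j₁ := by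
      intro j₁ j₂ h1 h2 h3
      rcases eq_or_lt_of_le h2 with rfl | h2'
      · exact le_refl _
      have h1' : 0 < j₂ := h1.trans h2'
      rw [hfeq j₁ h1, hfeq j₂ h1']
      have hsub : Finset.range j₁ ⊆ Finset.range j₂ := Finset.range_subset_range.mpr h2
      calc (Finset.range j₂).inf' (Finset.nonempty_range_iff.mpr h1'.ne')
            (fun t => dist (c i j₂) (c i t))
          ≤ (Finset.range j₁).inf' (Finset.nonempty_range_iff.mpr h1.ne')
            (fun t => dist (c i j₂) (c i t)) := by
            obtain ⟨t₀, ht₀, hteq⟩ := Finset.exists_mem_eq_inf' (Finset.nonempty_range_iff.mpr h1.ne')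
              (fun t => dist (c i j₂) (c i t))
            rw [hteq]
            exact Finset.inf'_le _ (hsub ht₀)
        _ ≤ _ := hgreedy i j₁ h1 (h2'.trans h3) (c i j₂) (hmem i j₂ h3)
    -- pairwise lower bound
    have hpair : ∀ s t, s < t → t < k' → f t ≤ dist (c i t) (c i s) := by
      intro s t hst htk
      rw [hfeq t (Nat.lt_of_le_of_lt (Nat.zero_le s) hst)]
      exact Finset.inf'_le _ (Finset.mem_range.mpr hst)
    have hk1 : 0 < k - 1 := by omega
    have hk1k' : k - 1 < k' := by omega
    set d : ℝ := f (k - 1) with hd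
    have hd0 : 0 ≤ d := by
      rw [hd, hfeq _ hk1]
      exact Finset.le_inf' _ _ fun t _ => dist_nonneg
    -- d ≤ ρ
    have hdρ : d ≤ ρ := by
      by_contra hcon
      push_neg at hcon
      have hdpos : 0 < d := lt_of_le_of_lt hρ0 hcon
      have hinj : Set.InjOn (c i) (Finset.range k) := by
        intro s hs t ht hst
        simp only [Finset.coe_range, Set.mem_Iio] at hs ht
        by_contra hne
        rcases Nat.lt_or_ge s t with h | h
        · have h1 : f t ≤ dist (c i t) (c i s) := hpair s t h (by omega)
          have h2 : d ≤ f t := hfmono t (k-1) (by omega) (by omega) (by omega)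
          rw [hst] at h1; simp at h1; linarith
        · have h : t < s := by omega
          have h1 : f s ≤ dist (c i s) (c i t) := hpair t s h (by omega)
          have h2 : d ≤ f s := hfmono s (k-1) (by omega) (by omega) (by omega)
          rw [hst] at h1; simp at h1; linarith
      set U' : Finset α := (Finset.range k).image (c i) with hU'
      have hU'S : U' ⊆ S := by
        intro y hy
        rw [hU', Finset.mem_image] at hy
        obtain ⟨t, ht, rfl⟩ := hy
        rw [hS]
        exact Finset.mem_biUnion.mpr ⟨i, Finset.mem_univ i, hmem i t (by
          simp only [Finset.mem_range] at ht; omega)⟩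
      have hU'card : U'.card = k := by
        rw [hU', Finset.card_image_of_injOn hinj, Finset.card_range]
      obtain ⟨u, hu, v, hv, huv, hduv⟩ := hopt U' hU'S hU'card
      rw [hU', Finset.mem_image] at hu hv
      obtain ⟨s, hs, rfl⟩ := hu
      obtain ⟨t, ht, rfl⟩ := hv
      simp only [Finset.mem_range] at hs ht
      rcases Nat.lt_or_ge s t with h | h
      · have h1 : f t ≤ dist (c i t) (c i s) := hpair s t h (by omega)
        have h2 : d ≤ f t := hfmono t (k-1) (by omega) (by omega) (by omega)
        rw [dist_comm] at hduv; linarith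
      · have hne : s ≠ t := fun hh => huv (by rw [hh])
        have h : t < s := by omega
        have h1 : f s ≤ dist (c i s) (c i t) := hpair t s h (by omega)
        have h2 : d ≤ f s := hfmono s (k-1) (by omega) (by omega) (by omega)
        linarith
    -- covering of Ss i by k-1 balls of radius d
    have hcov1 : ∀ q ∈ Ss i, ∃ t < k - 1, dist q (c i t) ≤ d := by
      intro q hq
      have := hgreedy i (k-1) hk1 hk1k' q hq
      rw [← hfeq _ hk1, ← hd] at this
      obtain ⟨t₀, ht₀, hteq⟩ := Finset.exists_mem_eq_inf'
        (Finset.nonempty_range_iff.mpr hk1.ne') (fun t => dist q (c i t))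
      exact ⟨t₀, Finset.mem_range.mp ht₀, by rw [← hteq]; exact this⟩
    -- iterated doubling
    obtain ⟨F, hFcard, hFsub⟩ := iter_double D hdouble m d ((Finset.range (k-1)).image (c i))
    set r : ℝ := d / 2 ^ m with hr
    have hr0 : 0 ≤ r := by positivity
    have hFk' : F.card ≤ k' := by
      have h1 : (F.card : ℝ) ≤ (k' : ℝ) := by
        calc (F.card : ℝ) ≤ (((Finset.range (k-1)).image (c i)).card : ℝ) * 2 ^ (D * m) := by
              exact_mod_cast hFcard
          _ ≤ (k : ℝ) * 2 ^ (D * m) := by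
              apply mul_le_mul_of_nonneg_right _ (by positivity)
              exact_mod_cast le_trans (Finset.card_image_le.trans (by rw [Finset.card_range])) (by omega)
          _ ≤ (8 / ε') ^ D * k := by
              rw [mul_comm]
              apply mul_le_mul_of_nonneg_right _ (by positivity)
              calc (2:ℝ) ^ (D * m) = ((2:ℝ) ^ m) ^ D := by rw [← pow_mul, mul_comm]
                _ ≤ (8 / ε') ^ D := pow_le_pow_left₀ (by positivity) hm1 D
          _ ≤ k' := hk'
      exact_mod_cast h1
    have hcovS : ∀ q ∈ Ss i, ∃ u ∈ F, dist q u ≤ r := by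
      intro q hq
      obtain ⟨t, ht, hdt⟩ := hcov1 q hq
      have hmem2 : q ∈ ⋃ y ∈ (Finset.range (k-1)).image (c i), closedBall y d := by
        simp only [Set.mem_iUnion]
        exact ⟨c i t, Finset.mem_image.mpr ⟨t, Finset.mem_range.mpr ht, rfl⟩,
          mem_closedBall.mpr hdt⟩
      have := hFsub hmem2
      simp only [Set.mem_iUnion] at this
      obtain ⟨u, hu, hqu⟩ := this
      exact ⟨u, hu, mem_closedBall.mp hqu⟩
    -- 2r ≤ (ε'/2) d
    have h2r : 2 * r ≤ ε' / 2 * d := by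
      have hp : (0:ℝ) < 2 ^ m := by positivity
      have h8 : (8:ℝ) < ε' * (2 ^ m * 2) := by
        rw [div_lt_iff₀ hε'] at hm2
        calc (8:ℝ) < 2 ^ (m + 1) * ε' := hm2
          _ = ε' * (2 ^ m * 2) := by rw [pow_succ]; ring
      have heq : 2 * r = 2 * d / 2 ^ m := by rw [hr]; ring
      rw [heq, div_le_iff₀ hp]
      nlinarith [mul_le_mul_of_nonneg_right h8.le hd0]
    -- main dichotomy: find a T-point within 2r of x
    have hfind : ∃ t < k', dist x (c i t) ≤ 2 * r := by
      have hk'1 : 0 < k' - 1 := by omega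
      have hk'1k' : k' - 1 < k' := by omega
      by_cases hc : f (k' - 1) ≤ 2 * r
      · have hgr := hgreedy i (k'-1) hk'1 hk'1k' x hxi
        rw [← hfeq _ hk'1] at hgr
        obtain ⟨t₀, ht₀, hteq⟩ := Finset.exists_mem_eq_inf'
          (Finset.nonempty_range_iff.mpr hk'1.ne') (fun t => dist x (c i t))
        refine ⟨t₀, by have := Finset.mem_range.mp ht₀; omega, ?_⟩
        have h1 : dist x (c i t₀) ≤ f (k' - 1) := by rw [← hteq]; exact hgr
        exact h1.trans hc
      · push_neg at hc
        -- pairwise > 2r : injectivity into F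
        have hlow : ∀ s t, s < t → t < k' → 2 * r < dist (c i t) (c i s) := by
          intro s t hst htk
          have h1 := hpair s t hst htk
          have h2 : f (k'-1) ≤ f t := hfmono t (k'-1) (by omega) (by omega) (by omega)
          linarith
        have hball : ∀ t, t < k' → ∃ u ∈ F, dist (c i t) u ≤ r :=
          fun t ht => hcovS (c i t) (hmem i t ht)
        classical
        set g : ℕ → α := fun t => if h : ∃ u ∈ F, dist (c i t) u ≤ r then h.choose else x with hg
        have hgspec : ∀ t, t < k' → g t ∈ F ∧ dist (c i t) (g t) ≤ r := by
          intro t ht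
          have h := hball t ht
          rw [hg]; simp only [dif_pos h]
          exact ⟨h.choose_spec.1, h.choose_spec.2⟩
        have hginj : Set.InjOn g (Finset.range k') := by
          intro s hs t ht hst
          simp only [Finset.coe_range, Set.mem_Iio] at hs ht
          by_contra hne
          have key2 : ∀ s t, s < t → t < k' → g s = g t → False := by
            intro s t h1 h2 heq
            have hs' := hgspec s (by omega)
            have ht' := hgspec t h2
            have : dist (c i t) (c i s) ≤ 2 * r := by
              calc dist (c i t) (c i s) ≤ dist (c i t) (g t) + dist (g t) (c i s) :=
                    dist_triangle _ _ _
                _ ≤ r + r := by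
                    refine add_le_add ht'.2 ?_
                    rw [← heq, dist_comm]
                    exact hs'.2
                _ = 2 * r := by ring
            exact absurd this (not_le.mpr (hlow s t h1 h2))
          rcases Nat.lt_or_ge s t with h | h
          · exact key2 s t h ht hst
          · exact key2 t s (by omega) hs hst.symm
        have himg : (Finset.range k').image g = F := by
          apply Finset.eq_of_subset_of_card_le
          · intro y hy
            rw [Finset.mem_image] at hy
            obtain ⟨t, ht, rfl⟩ := hy
            exact (hgspec t (Finset.mem_range.mp ht)).1
          · rw [Finset.card_image_of_injOn hginj, Finset.card_range]
            exact hFk'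
        obtain ⟨u, hu, hxu⟩ := hcovS x hxi
        rw [← himg, Finset.mem_image] at hu
        obtain ⟨t, ht, rfl⟩ := hu
        refine ⟨t, Finset.mem_range.mp ht, ?_⟩
        calc dist x (c i t) ≤ dist x (g t) + dist (g t) (c i t) := dist_triangle _ _ _
          _ ≤ r + r := add_le_add hxu (by rw [dist_comm]; exact (hgspec t (Finset.mem_range.mp ht)).2)
          _ = 2 * r := by ring
    obtain ⟨t, ht, hdt⟩ := hfind
    refine ⟨c i t, ?_, ?_⟩
    · rw [hT]
      exact Finset.mem_biUnion.mpr ⟨i, Finset.mem_univ i,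
        Finset.mem_image.mpr ⟨t, Finset.mem_range.mpr ht, rfl⟩⟩
    · calc dist x (c i t) ≤ 2 * r := hdt
        _ ≤ ε' / 2 * d := h2r
        _ ≤ ε' / 2 * ρ := by
            apply mul_le_mul_of_nonneg_left hdρ (by positivity)
  -- build p
  intro X hXS _
  classical
  refine ⟨fun x => if h : ∃ y ∈ T, dist x y ≤ (ε'/2) * ρ then h.choose else x, ?_, ?_⟩
  · intro x hx
    have h := key x (hXS hx)
    simp only [dif_pos h]
    exact h.choose_spec.1
  · intro x hx
    have h := key x (hXS hx)
    simp only [dif_pos h]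
    exact h.choose_spec.2
end
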